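/- Let x be a nonzero vector with ρ := f(x) satisfying λ₁ ≤ ρ < (λ₁+λ₂)/2, and let u₁ be an eigenvector of the pencil (A,M) for λ₁. Then (xᵀM u₁)² ≥ ((λ₂−ρ)/(λ₂−λ₁))·‖x‖²_M·‖u₁‖²_M and (xᵀA u₁)² ≥ ((ρ⁻¹−λ₂⁻¹)/(λ₁⁻¹−λ₂⁻¹))·‖x‖²_A·‖u₁‖²_A. -/

import Mathlib

open Matrix Finset

private lemma dp_sum_right {m k : ℕ} (v : Fin m → ℝ) (w : Fin k → Fin m → ℝ) :
    v ⬝ᵥ ∑ j, w j = ∑ j, v ⬝ᵥ w j := by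
  simp [dotProduct, Finset.mul_sum]; exact Finset.sum_comm

private lemma dp_sum_left {m k : ℕ} (v : Fin m → ℝ) (w : Fin k → Fin m → ℝ) :
    (∑ j, w j) ⬝ᵥ v = ∑ j, w j ⬝ᵥ v := by
  simp [dotProduct, Finset.sum_mul]; exact Finset.sum_comm

private lemma mv_sum {m : ℕ} (M : Matrix (Fin m) (Fin m) ℝ) (d : Fin m → ℝ)
    (u : Fin m → Fin m → ℝ) :
    M *ᵥ (∑ j, d j • u j) = ∑ j, d j • (M *ᵥ u j) := by
  rw [← M.mulVecLin_apply, map_sum]; simp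

private lemma pair_M {m : ℕ} (M : Matrix (Fin m) (Fin m) ℝ) (u : Fin m → Fin m → ℝ)
    (horth : ∀ i j, u i ⬝ᵥ M *ᵥ u j = if i = j then 1 else 0)
    (c d : Fin m → ℝ) :
    (∑ i, c i • u i) ⬝ᵥ M *ᵥ (∑ j, d j • u j) = ∑ i, c i * d i := by
  rw [mv_sum, dp_sum_left]
  have : ∀ i, (c i • u i) ⬝ᵥ ∑ j, d j • (M *ᵥ u j) = c i * d i := by
    intro i
    rw [dp_sum_right]
    simp only [smul_dotProduct, dotProduct_smul, horth, smul_eq_mul, mul_ite, mul_one,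
      mul_zero, Finset.sum_ite_eq, Finset.mem_univ, if_true]
    ring
  simp [this]

private lemma pair_A {m : ℕ} (A M : Matrix (Fin m) (Fin m) ℝ) (u : Fin m → Fin m → ℝ)
    (lam : Fin m → ℝ)
    (heig : ∀ i, A *ᵥ u i = lam i • (M *ᵥ u i))
    (horth : ∀ i j, u i ⬝ᵥ M *ᵥ u j = if i = j then 1 else 0)
    (c d : Fin m → ℝ) :
    (∑ i, c i • u i) ⬝ᵥ A *ᵥ (∑ j, d j • u j) = ∑ i, lam i * (c i * d i) := by
  rw [mv_sum, dp_sum_left]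
  have : ∀ i, (c i • u i) ⬝ᵥ ∑ j, d j • (A *ᵥ u j) = lam i * (c i * d i) := by
    intro i
    rw [dp_sum_right]
    simp only [heig, smul_dotProduct, dotProduct_smul, horth, smul_eq_mul, mul_ite, mul_one,
      mul_zero, Finset.sum_ite_eq, Finset.mem_univ, if_true]
    ring
  simp [this]

private lemma dp_single_rM {m : ℕ} (M : Matrix (Fin m) (Fin m) ℝ) (u : Fin m → Fin m → ℝ)
    (horth : ∀ i j, u i ⬝ᵥ M *ᵥ u j = if i = j then 1 else 0)
    (g : Fin m → ℝ) (j : Fin m) :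
    u j ⬝ᵥ M *ᵥ (∑ i, g i • u i) = g j := by
  rw [mv_sum, dp_sum_right]
  simp [dotProduct_smul, horth, mul_ite, Finset.sum_ite_eq']

private lemma dp_single_rA {m : ℕ} (A M : Matrix (Fin m) (Fin m) ℝ) (u : Fin m → Fin m → ℝ)
    (lam : Fin m → ℝ)
    (heig : ∀ i, A *ᵥ u i = lam i • (M *ᵥ u i))
    (horth : ∀ i j, u i ⬝ᵥ M *ᵥ u j = if i = j then 1 else 0)
    (g : Fin m → ℝ) (j : Fin m) :
    u j ⬝ᵥ A *ᵥ (∑ i, g i • u i) = lam j * g j := by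
  rw [mv_sum, dp_sum_right]
  simp only [heig, smul_smul, dotProduct_smul, horth, smul_eq_mul, mul_ite, mul_one, mul_zero]
  rw [Finset.sum_ite_eq]
  simp [mul_comm]

theorem statement_3 {n : ℕ}
    (A M : Matrix (Fin (n+2)) (Fin (n+2)) ℝ)
    (hA : A.PosDef) (hM : M.PosDef)
    (lam : Fin (n+2) → ℝ) (u : Fin (n+2) → (Fin (n+2) → ℝ))
    (hlam_pos : 0 < lam 0) (hgap : lam 0 < lam 1) (hmono : Monotone lam)
    (heig : ∀ i, A *ᵥ u i = lam i • (M *ᵥ u i))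
    (horth : ∀ i j, u i ⬝ᵥ M *ᵥ u j = if i = j then 1 else 0)
    (x : Fin (n+2) → ℝ) (hx : x ≠ 0)
    (ρ : ℝ) (hρdef : ρ = (x ⬝ᵥ A *ᵥ x) / (x ⬝ᵥ M *ᵥ x))
    (hρ1 : lam 0 ≤ ρ) (hρ2 : ρ < (lam 0 + lam 1) / 2)
    (u₁ : Fin (n+2) → ℝ) (hu₁ : u₁ ≠ 0)
    (heig₁ : A *ᵥ u₁ = lam 0 • (M *ᵥ u₁)) :
    ((lam 1 - ρ) / (lam 1 - lam 0)) * (x ⬝ᵥ M *ᵥ x) * (u₁ ⬝ᵥ M *ᵥ u₁) ≤ (x ⬝ᵥ M *ᵥ u₁) ^ 2 ∧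
      ((ρ⁻¹ - (lam 1)⁻¹) / ((lam 0)⁻¹ - (lam 1)⁻¹)) * (x ⬝ᵥ A *ᵥ x) * (u₁ ⬝ᵥ A *ᵥ u₁)
        ≤ (x ⬝ᵥ A *ᵥ u₁) ^ 2 := by
  have hone_le : ∀ j : Fin (n+2), j ≠ 0 → (1 : Fin (n+2)) ≤ j := by
    intro j hj
    have hjv : (j : ℕ) ≠ 0 := by intro h; apply hj; ext; simp [h]
    rw [Fin.le_def, Fin.val_one]
    omega
  have hsingle : ∀ (g : Fin (n+2) → ℝ) (j), (∑ i, g i • u i) ⬝ᵥ M *ᵥ u j = g j := by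
    intro g j
    rw [dp_sum_left]
    simp [smul_dotProduct, horth, mul_ite, Finset.sum_ite_eq']
  have hli : LinearIndependent ℝ u := by
    rw [Fintype.linearIndependent_iff]
    intro g hg j
    have := hsingle g j
    rw [hg, zero_dotProduct] at this
    exact this.symm
  have hcard : Fintype.card (Fin (n+2)) = Module.finrank ℝ (Fin (n+2) → ℝ) := by
    simp [Module.finrank_fin_fun]
  let b := basisOfLinearIndependentOfCardEqFinrank hli hcard
  have hb : ∀ i, b i = u i := fun i =>
    congrFun (coe_basisOfLinearIndependentOfCardEqFinrank hli hcard) i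
  set a : Fin (n+2) → ℝ := fun i => b.repr x i with ha
  have hxa : x = ∑ i, a i • u i := by
    conv_lhs => rw [← b.sum_repr x]
    exact Finset.sum_congr rfl fun i _ => by rw [hb]
  set c0 : ℝ := b.repr u₁ 0 with hc0
  set c : Fin (n+2) → ℝ := fun i => if i = 0 then c0 else 0 with hc
  have hu₁full : u₁ = ∑ i, (b.repr u₁ i) • u i := by
    conv_lhs => rw [← b.sum_repr u₁]
    exact Finset.sum_congr rfl fun i _ => by rw [hb]
  have hcoef : ∀ j, j ≠ 0 → b.repr u₁ j = 0 := by
    intro j hj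
    have h1 : u j ⬝ᵥ A *ᵥ u₁ = lam j * b.repr u₁ j := by
      conv_lhs => rw [hu₁full]
      exact dp_single_rA A M u lam heig horth _ j
    have h2 : u j ⬝ᵥ A *ᵥ u₁ = lam 0 * b.repr u₁ j := by
      rw [heig₁, dotProduct_smul, smul_eq_mul]
      congr 1
      conv_lhs => rw [hu₁full]
      exact dp_single_rM M u horth _ j
    have hjge : lam 1 ≤ lam j := hmono (hone_le j hj)
    have h3 : (lam j - lam 0) * b.repr u₁ j = 0 := by rw [sub_mul]; rw [h1] at h2; linarith
    have hne : lam j - lam 0 ≠ 0 := by nlinarith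
    exact (mul_eq_zero.mp h3).resolve_left hne
  have hu₁c : u₁ = ∑ i, c i • u i := by
    rw [hu₁full]
    refine Finset.sum_congr rfl fun i _ => ?_
    by_cases hi : i = 0
    · simp [hc, hi, hc0]
    · simp [hc, hi, hcoef i hi]
  have hc0ne : c0 ≠ 0 := by
    intro h
    apply hu₁
    rw [hu₁c]
    refine Finset.sum_eq_zero fun i _ => ?_
    by_cases hi : i = 0 <;> simp [hc, hi, h]
  have hS : x ⬝ᵥ M *ᵥ x = ∑ i, a i * a i := by rw [hxa, pair_M M u horth]
  have hT : x ⬝ᵥ A *ᵥ x = ∑ i, lam i * (a i * a i) := by rw [hxa, pair_A A M u lam heig horth]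
  have hMc : ∀ (d : Fin (n+2) → ℝ), (∑ i, d i * c i) = d 0 * c0 := by
    intro d
    rw [show (∑ i, d i * c i) = ∑ i, if i = 0 then d i * c0 else 0 from
      Finset.sum_congr rfl fun i _ => by by_cases hi : i = 0 <;> simp [hc, hi]]
    simp
  have hxMu : x ⬝ᵥ M *ᵥ u₁ = a 0 * c0 := by
    rw [hxa, hu₁c, pair_M M u horth, hMc]
  have huMu : u₁ ⬝ᵥ M *ᵥ u₁ = c0 * c0 := by
    rw [hu₁c, pair_M M u horth, hMc, hc]; simp
  have hxAu : x ⬝ᵥ A *ᵥ u₁ = lam 0 * (a 0 * c0) := by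
    rw [heig₁, dotProduct_smul, hxa, hu₁c, pair_M M u horth, hMc]; rfl
  have huAu : u₁ ⬝ᵥ A *ᵥ u₁ = lam 0 * (c0 * c0) := by
    rw [heig₁, dotProduct_smul, hu₁c, pair_M M u horth, hMc]
    simp [hc]
  have hSpos : 0 < x ⬝ᵥ M *ᵥ x := by
    have := hM.dotProduct_mulVec_pos hx
    simpa using this
  have hTS : x ⬝ᵥ A *ᵥ x = ρ * (x ⬝ᵥ M *ᵥ x) := by
    rw [hρdef, div_mul_cancel₀]
    exact ne_of_gt hSpos
  have hkey : (lam 1 - ρ) * (x ⬝ᵥ M *ᵥ x) ≤ (lam 1 - lam 0) * (a 0 * a 0) := by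
    have hsum : lam 1 * (∑ i, a i * a i) - (∑ i, lam i * (a i * a i))
        ≤ (lam 1 - lam 0) * (a 0 * a 0) := by
      rw [Finset.mul_sum, ← Finset.sum_sub_distrib]
      have h0 : ∀ i ∈ Finset.univ.erase (0 : Fin (n+2)),
          lam 1 * (a i * a i) - lam i * (a i * a i) ≤ 0 := by
        intro i hi
        have hi0 : i ≠ 0 := Finset.ne_of_mem_erase hi
        have : lam 1 ≤ lam i := hmono (hone_le i hi0)
        nlinarith [mul_self_nonneg (a i)]
      have hsp := Finset.sum_nonpos h0
      calc ∑ i, (lam 1 * (a i * a i) - lam i * (a i * a i))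
          = (∑ i ∈ Finset.univ.erase 0, (lam 1 * (a i * a i) - lam i * (a i * a i)))
            + (lam 1 * (a 0 * a 0) - lam 0 * (a 0 * a 0)) := by
            rw [Finset.sum_erase_add]
            exact Finset.mem_univ 0
        _ ≤ (lam 1 - lam 0) * (a 0 * a 0) := by
            have he : lam 1 * (a 0 * a 0) - lam 0 * (a 0 * a 0)
                = (lam 1 - lam 0) * (a 0 * a 0) := by ring
            linarith
    have : lam 1 * (x ⬝ᵥ M *ᵥ x) - ρ * (x ⬝ᵥ M *ᵥ x) ≤ (lam 1 - lam 0) * (a 0 * a 0) := by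
      rw [← hTS, hS, hT]; exact hsum
    linarith
  have hgap' : (0:ℝ) < lam 1 - lam 0 := by linarith
  have hρpos : 0 < ρ := lt_of_lt_of_le hlam_pos hρ1
  have hlam1pos : 0 < lam 1 := by linarith
  constructor
  · rw [hxMu, huMu, div_mul_eq_mul_div, div_mul_eq_mul_div, div_le_iff₀ hgap']
    nlinarith [mul_le_mul_of_nonneg_right hkey (mul_self_nonneg c0)]
  · rw [hxAu, huAu, hTS]
    have e1 : ρ⁻¹ - (lam 1)⁻¹ = (lam 1 - ρ) / (ρ * lam 1) := by
      field_simp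
    have e2 : (lam 0)⁻¹ - (lam 1)⁻¹ = (lam 1 - lam 0) / (lam 0 * lam 1) := by
      field_simp
    rw [e1, e2, div_div_div_eq]
    have e3 : (0:ℝ) < ρ * lam 1 * (lam 1 - lam 0) := by positivity
    rw [div_mul_eq_mul_div, div_mul_eq_mul_div, div_le_iff₀ e3]
    have hnn : (0:ℝ) ≤ ρ * lam 0 ^ 2 * lam 1 * (c0 * c0) :=
      mul_nonneg (mul_nonneg (mul_nonneg hρpos.le (by positivity)) hlam1pos.le)
        (mul_self_nonneg c0)
    have h := mul_le_mul_of_nonneg_right hkey hnn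
    calc (lam 1 - ρ) * (lam 0 * lam 1) * (ρ * (x ⬝ᵥ M *ᵥ x)) * (lam 0 * (c0 * c0))
        = (lam 1 - ρ) * (x ⬝ᵥ M *ᵥ x) * (ρ * lam 0 ^ 2 * lam 1 * (c0 * c0)) := by ring
      _ ≤ (lam 1 - lam 0) * (a 0 * a 0) * (ρ * lam 0 ^ 2 * lam 1 * (c0 * c0)) := h
      _ = (lam 0 * (a 0 * c0)) ^ 2 * (ρ * lam 1 * (lam 1 - lam 0)) := by ring
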